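/- In the directed graph on vertices v_1,…,v_n (n ≥ 2) with parallel arc pairs between consecutive vertices, where both arcs from v_1 to v_2 have cost 1, and for i = 2,…,n−1 the two arcs from v_i to v_{i+1} have costs 0 and 2^{i−2} respectively: (a) every v_1-v_n path has cost in the set {1, 2, …, 2^{n−2}}; (b) for every integer z with 1 ≤ z ≤ 2^{n−2} there exist exactly two distinct v_1-v_n paths of cost z; (c) the total number of v_1-v_n paths is 2^{n−1}; hence the number of distinct path-cost values is 2^{n−2}, exponential in n. -/
import Mathlib

def pcost (n : ℕ) (f : Fin (n - 1) → Bool) : ℕ :=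
  1 + ∑ i : Fin (n - 1), if 1 ≤ i.val ∧ f i then 2 ^ (i.val - 1) else 0

private def V (k : ℕ) (g : Fin k → Bool) : ℕ :=
  ∑ j : Fin k, if g j then 2 ^ (j : ℕ) else 0

private def Ek (k : ℕ) : (Fin k → Bool) ≃ Fin (2 ^ k) :=
  (Equiv.piCongrRight fun _ => finTwoEquiv.symm).trans finFunctionFinEquiv

private lemma V_eq (k : ℕ) (g : Fin k → Bool) : V k g = (Ek k g : ℕ) := by
  simp only [V, Ek, Equiv.trans_apply, finFunctionFinEquiv_apply]
  refine Finset.sum_congr rfl fun j _ => ?_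
  rcases Bool.eq_false_or_eq_true (g j) with h | h <;>
    simp [h, Equiv.piCongrRight, finTwoEquiv]

private lemma V_lt (k : ℕ) (g : Fin k → Bool) : V k g < 2 ^ k := by
  rw [V_eq]; exact (Ek k g).isLt

private lemma V_exu (k : ℕ) {x : ℕ} (hx : x < 2 ^ k) :
    ∃! g : Fin k → Bool, V k g = x := by
  refine ⟨(Ek k).symm ⟨x, hx⟩, by simp [V_eq], fun g hg => ?_⟩
  have hg' : V k g = x := hg
  apply (Ek k).injective
  rw [Equiv.apply_symm_apply]
  exact Fin.ext (by rw [← V_eq, hg'])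

private lemma pcost_eq (k : ℕ) (f : Fin (k + 1) → Bool) :
    pcost (k + 2) f = 1 + V k (fun j => f j.succ) := by
  simp only [pcost, V]
  congr 1
  show (∑ i : Fin (k + 1), if 1 ≤ i.val ∧ f i then 2 ^ (i.val - 1) else 0) = _
  rw [Fin.sum_univ_succ]
  simp [Fin.succ]

private def e0 (k : ℕ) : (Fin (k + 1) → Bool) ≃ Bool × (Fin k → Bool) :=
  ⟨fun f => (f 0, fun j => f j.succ), fun p => Fin.cons p.1 p.2,
    fun f => by funext j; induction j using Fin.cases <;> simp,
    fun p => by simp⟩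

private lemma e0_snd (k : ℕ) (f : Fin (k + 1) → Bool) :
    (e0 k f).2 = fun j => f j.succ := rfl

private theorem stmt_4_aux (k : ℕ) :
    (∀ f : Fin (k + 1) → Bool, 1 ≤ pcost (k + 2) f ∧ pcost (k + 2) f ≤ 2 ^ k) ∧
    (∀ z : ℕ, 1 ≤ z → z ≤ 2 ^ k →
      Nat.card {f : Fin (k + 1) → Bool // pcost (k + 2) f = z} = 2) ∧
    Nat.card (Fin (k + 1) → Bool) = 2 ^ (k + 1) ∧
    (Finset.univ.image (pcost (k + 2)) : Finset ℕ).card = 2 ^ k := by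
  refine ⟨?_, ?_, ?_, ?_⟩
  · intro f
    rw [pcost_eq]
    have := V_lt k (fun j => f j.succ)
    omega
  · intro z hz1 hz2
    have hlt : z - 1 < 2 ^ k := by omega
    obtain ⟨g₀, hg₀, hgu⟩ := V_exu k hlt
    have e1 : {f : Fin (k + 1) → Bool // pcost (k + 2) f = z} ≃
        {x : Bool × (Fin k → Bool) // V k x.2 = z - 1} := by
      refine (e0 k).subtypeEquiv fun f => ?_
      rw [pcost_eq, e0_snd]
      omega
    have e2 : {x : Bool × (Fin k → Bool) // V k x.2 = z - 1} ≃
        Bool × {g : Fin k → Bool // V k g = z - 1} :=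
      ⟨fun x => (x.1.1, ⟨x.1.2, x.2⟩), fun y => ⟨(y.1, y.2.1), y.2.2⟩,
        fun _ => rfl, fun _ => rfl⟩
    rw [Nat.card_congr (e1.trans e2), Nat.card_prod,
      Nat.card_eq_one_iff_unique.2 ⟨⟨fun a b => Subtype.ext (by
        rw [hgu _ a.2, hgu _ b.2])⟩, ⟨⟨g₀, hg₀⟩⟩⟩]
    simp [Nat.card_eq_fintype_card]
  · simp [Nat.card_eq_fintype_card]
  · have : (Finset.univ.image (pcost (k + 2)) : Finset ℕ) = Finset.Icc 1 (2 ^ k) := by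
      ext z
      simp only [Finset.mem_image, Finset.mem_univ, true_and, Finset.mem_Icc]
      constructor
      · rintro ⟨f, rfl⟩
        rw [pcost_eq]
        have := V_lt k (fun j => f j.succ)
        omega
      · rintro ⟨hz1, hz2⟩
        obtain ⟨g₀, hg₀, -⟩ := V_exu k (show z - 1 < 2 ^ k by omega)
        refine ⟨(Fin.cons false g₀ : Fin (k+1) → Bool), ?_⟩
        rw [pcost_eq]
        have h : (fun j => (Fin.cons false g₀ : Fin (k+1) → Bool) j.succ) = g₀ := by
          funext j; simp
        rw [h, hg₀]; omega
    rw [this, Nat.card_Icc]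
    exact Nat.add_sub_cancel _ _

theorem stmt_4 (n : ℕ) (hn : 2 ≤ n) :
    (∀ f : Fin (n - 1) → Bool, 1 ≤ pcost n f ∧ pcost n f ≤ 2 ^ (n - 2)) ∧
    (∀ z : ℕ, 1 ≤ z → z ≤ 2 ^ (n - 2) →
      Nat.card {f : Fin (n - 1) → Bool // pcost n f = z} = 2) ∧
    Nat.card (Fin (n - 1) → Bool) = 2 ^ (n - 1) ∧
    (Finset.univ.image (pcost n)).card = 2 ^ (n - 2) := by
  obtain ⟨k, rfl⟩ : ∃ k, n = k + 2 := ⟨n - 2, by omega⟩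
  exact stmt_4_aux k
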